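/- Let T be a finite rooted directed tree with k vertices and root r, and let variables X_1, …, X_k be given. For a bijection φ from the vertices of T to {X_1,…,X_k}, set ⟨T,φ⟩ = (Π_{v ≠ r} φ(v)) / (Π_{(v_1 → v_2) ∈ E(T)} (φ(v_1) − φ(v_2))). Then the sum ⟨T⟩ = Σ_φ ⟨T,φ⟩ over all bijections φ is a symmetric polynomial of degree 0 in X_1,…,X_k, i.e., a constant integer. -/

import Mathlib

open MvPolynomial



lemma prod_dvd_of_prime {R : Type*} [CommRing R] [IsDomain R] {ι : Type*}
    (s : Finset ι) (f : ι → R) (hp : ∀ i ∈ s, Prime (f i))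
    (hna : ∀ i ∈ s, ∀ j ∈ s, i ≠ j → ¬ Associated (f i) (f j))
    {n : R} (hd : ∀ i ∈ s, f i ∣ n) : (∏ i ∈ s, f i) ∣ n := by
  classical
  induction s using Finset.cons_induction generalizing n with
  | empty => simp
  | cons i s his ih =>
    obtain ⟨m, rfl⟩ := hd i (Finset.mem_cons_self i s)
    have hi := hp i (Finset.mem_cons_self i s)
    have hstep : ∀ j ∈ s, f j ∣ m := by
      intro j hj
      have hji : j ≠ i := fun h => his (h ▸ hj)
      have hpj := hp j (Finset.mem_cons.2 (Or.inr hj))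
      rcases (hpj.2.2 _ _ (hd j (Finset.mem_cons.2 (Or.inr hj)))) with h | h
      · exact absurd (hpj.associated_of_dvd hi h)
          (hna j (Finset.mem_cons.2 (Or.inr hj)) i (Finset.mem_cons_self i s) hji)
      · exact h
    have := ih (fun i hi => hp i (Finset.mem_cons.2 (Or.inr hi)))
      (fun a ha b hb hab => hna a (Finset.mem_cons.2 (Or.inr ha)) b (Finset.mem_cons.2 (Or.inr hb)) hab)
      hstep
    rw [Finset.prod_cons]
    exact mul_dvd_mul_left (f i) this

lemma dvd_sub_rename {R : Type*} [CommRing R] {τ : Type*} [DecidableEq τ] (i j : τ)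
    (p : MvPolynomial τ R) :
    (X j - X i) ∣ p - rename (Equiv.swap i j) p := by
  induction p using MvPolynomial.induction_on with
  | C a => simp
  | add p q hp hq =>
    have : p + q - rename (Equiv.swap i j) (p + q)
        = (p - rename (Equiv.swap i j) p) + (q - rename (Equiv.swap i j) q) := by
      rw [map_add]; ring
    rw [this]; exact dvd_add hp hq
  | mul_X p v hp =>
    have key : (X j - X i) ∣ (X v - X (Equiv.swap i j v) : MvPolynomial τ R) := by
      rcases eq_or_ne v i with rfl | hvi
      · rw [Equiv.swap_apply_left]; exact dvd_sub_comm.mp dvd_rfl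
      rcases eq_or_ne v j with rfl | hvj
      · rw [Equiv.swap_apply_right]
      · rw [Equiv.swap_apply_of_ne_of_ne hvi hvj]; simp
    have : p * X v - rename (Equiv.swap i j) (p * X v)
        = (p - rename (Equiv.swap i j) p) * X v
          + rename (Equiv.swap i j) p * (X v - X (Equiv.swap i j v)) := by
      rw [map_mul, rename_X]; ring
    rw [this]
    exact dvd_add (hp.mul_right _) (key.mul_left _)


lemma prime_X_sub_X {k : ℕ} {i j : Fin k} (h : i ≠ j) :
    Prime (X j - X i : MvPolynomial (Fin k) ℚ) := by
  cases k with
  | zero => exact absurd i.2 (Nat.not_lt_zero _)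
  | succ m =>
    set π : Fin (m+1) ≃ Fin (m+1) := Equiv.swap 0 j with hπ
    have hπj : π j = 0 := Equiv.swap_apply_right 0 j
    have hπi : π i ≠ 0 := by
      intro hc
      have : π i = π j := by rw [hπj, hc]
      exact h (π.injective this)
    obtain ⟨i₀, hi₀⟩ := Fin.exists_succ_eq.2 hπi
    have e1 := (MulEquiv.prime_iff (renameEquiv ℚ π).toMulEquiv
      (p := (X j - X i : MvPolynomial (Fin (m+1)) ℚ))).symm
    have e2 := (MulEquiv.prime_iff (finSuccEquiv ℚ m).toMulEquiv
      (p := (X 0 - X (Fin.succ i₀) : MvPolynomial (Fin (m+1)) ℚ))).symm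
    have himg : (renameEquiv ℚ π).toMulEquiv (X j - X i) = X 0 - X (Fin.succ i₀) := by
      show (renameEquiv ℚ π) (X j - X i) = _
      rw [map_sub, renameEquiv_apply, renameEquiv_apply, rename_X, rename_X, hπj, hi₀]
    rw [e1, himg, e2]
    have : (finSuccEquiv ℚ m).toMulEquiv (X 0 - X (Fin.succ i₀))
        = Polynomial.X - Polynomial.C (X i₀) := by
      show (finSuccEquiv ℚ m) _ = _
      rw [map_sub, finSuccEquiv_X_zero, finSuccEquiv_X_succ]
    rw [this]
    exact Polynomial.prime_X_sub_C _


lemma exists_C_of_mul_isHomogeneous {σ : Type*} {f g : MvPolynomial σ ℚ} {n : ℕ}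
    (hf : f.IsHomogeneous n) (hf0 : f ≠ 0) (hfg : (f * g).IsHomogeneous n) :
    ∃ γ : ℚ, g = C γ := by
  have hzero : ∀ d : ℕ, d ≠ 0 → f * homogeneousComponent d g = 0 := by
    intro d hd
    have h1 : homogeneousComponent (n + d) (f * g) = 0 := by
      rw [homogeneousComponent_of_mem ((mem_homogeneousSubmodule _ _).2 hfg)]
      simp [Nat.add_eq_left, hd]
    have h2 : f * g = ∑ d' ∈ Finset.range (g.totalDegree + 1),
        f * homogeneousComponent d' g := by
      rw [← Finset.mul_sum, sum_homogeneousComponent]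
    rw [h2, map_sum] at h1
    have h3 : ∀ d' ∈ Finset.range (g.totalDegree + 1),
        homogeneousComponent (n + d) (f * homogeneousComponent d' g)
          = if d' = d then f * homogeneousComponent d' g else 0 := by
      intro d' _
      have : (f * homogeneousComponent d' g).IsHomogeneous (n + d') :=
        hf.mul (homogeneousComponent_isHomogeneous d' g)
      rw [homogeneousComponent_of_mem ((mem_homogeneousSubmodule _ _).2 this)]
      rcases eq_or_ne d' d with h | h
      · subst h; simp
      · rw [if_neg (by omega), if_neg h]
    rw [Finset.sum_congr rfl h3, Finset.sum_ite_eq' _ d] at h1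
    by_cases hmem : d ∈ Finset.range (g.totalDegree + 1)
    · rw [if_pos hmem] at h1; exact h1
    · have : homogeneousComponent d g = 0 := by
        apply homogeneousComponent_eq_zero
        simpa [Nat.lt_succ_iff, not_le] using hmem
      rw [this, mul_zero]
  refine ⟨coeff 0 g, ?_⟩
  have hg : g = ∑ d ∈ Finset.range (g.totalDegree + 1), homogeneousComponent d g :=
    (sum_homogeneousComponent g).symm
  conv_lhs => rw [hg]
  rw [Finset.sum_eq_single_of_mem 0 (Finset.mem_range.2 (Nat.succ_pos _))]
  · rw [homogeneousComponent_zero]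
  · intro d _ hd
    have := hzero d hd
    rcases mul_eq_zero.1 this with h | h
    · exact absurd h hf0
    · exact h


lemma prod_pairs_eq {k : ℕ} {R : Type*} [CommRing R] (f : Fin k → Fin k → R) :
    ∏ p ∈ Finset.univ.filter (fun p : Fin k × Fin k => p.1 < p.2), f p.1 p.2
      = ∏ i, ∏ j ∈ Finset.Ioi i, f i j := by
  rw [Finset.prod_sigma']
  apply Finset.prod_nbij' (i := fun p => ⟨p.1, p.2⟩) (j := fun s => (s.1, s.2))
  · intro p hp
    simp only [Finset.mem_sigma, Finset.mem_univ, Finset.mem_Ioi, true_and]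
    exact (Finset.mem_filter.1 hp).2
  · intro s hs
    simp only [Finset.mem_filter, Finset.mem_univ, true_and]
    simpa using (Finset.mem_sigma.1 hs).2
  · intro p _; rfl
  · intro s _; rfl
  · intro p _; rfl

lemma rename_swap_vandermonde {k : ℕ} {i j : Fin k} (h : i ≠ j) :
    rename (Equiv.swap i j)
        (∏ p ∈ Finset.univ.filter (fun p : Fin k × Fin k => p.1 < p.2),
          (X p.2 - X p.1 : MvPolynomial (Fin k) ℚ))
      = - ∏ p ∈ Finset.univ.filter (fun p : Fin k × Fin k => p.1 < p.2),
          (X p.2 - X p.1 : MvPolynomial (Fin k) ℚ) := by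
  have hD : ∏ p ∈ Finset.univ.filter (fun p : Fin k × Fin k => p.1 < p.2),
      (X p.2 - X p.1 : MvPolynomial (Fin k) ℚ)
      = (Matrix.vandermonde (fun a => (X a : MvPolynomial (Fin k) ℚ))).det := by
    rw [Matrix.det_vandermonde]
    exact prod_pairs_eq fun a b => (X b - X a : MvPolynomial (Fin k) ℚ)
  rw [hD]
  show (rename (Equiv.swap i j)).toRingHom (Matrix.vandermonde fun a => (X a : MvPolynomial (Fin k) ℚ)).det = _
  rw [RingHom.map_det, RingHom.mapMatrix_apply]
  have hmap : (Matrix.vandermonde (fun a => (X a : MvPolynomial (Fin k) ℚ))).map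
        (rename (Equiv.swap i j)).toRingHom
      = fun a => (Matrix.vandermonde (fun a => (X a : MvPolynomial (Fin k) ℚ)))
          (Equiv.swap i j a) := by
    ext a b
    simp [Matrix.vandermonde_apply, Matrix.map_apply]
  rw [hmap]
  have : (fun a => Matrix.vandermonde (fun a => (X a : MvPolynomial (Fin k) ℚ)) ((Equiv.swap i j) a))
      = (Matrix.vandermonde fun a => (X a : MvPolynomial (Fin k) ℚ)).submatrix (Equiv.swap i j) id := by
    ext a b; rfl
  rw [this, Matrix.det_permute, Equiv.Perm.sign_swap h]
  simp


/-- The rooted-tree evaluation `⟨T⟩ = Σ_φ ⟨T,φ⟩`: `T` has vertex set `Fin k`, directed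
edge set `E`, and root `r`; the sum is over all bijections `φ` (equivalently permutations
`σ` of `Fin k`, with `φ v = X (σ v)`) of
`(Π_{v ≠ r} φ(v)) / (Π_{(v₁ → v₂) ∈ E} (φ(v₁) − φ(v₂)))`,
computed in the field of rational functions `ℚ(X_1, …, X_k)`. -/
noncomputable def treeEval (k : ℕ) (E : Finset (Fin k × Fin k)) (r : Fin k) :
    FractionRing (MvPolynomial (Fin k) ℚ) :=
  ∑ σ : Equiv.Perm (Fin k),
    (∏ v ∈ Finset.univ.erase r,
        algebraMap (MvPolynomial (Fin k) ℚ) (FractionRing (MvPolynomial (Fin k) ℚ))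
          (X (σ v))) /
      ∏ e ∈ E,
        algebraMap (MvPolynomial (Fin k) ℚ) (FractionRing (MvPolynomial (Fin k) ℚ))
          (X (σ e.1) - X (σ e.2))

/-- For a finite rooted directed tree `T` with `k` vertices (vertex set `Fin k`, directed
edge set `E` without loops or doubled edges, whose underlying undirected graph is a tree)
and root `r`, the total evaluation `⟨T⟩` is a constant integer (in particular a symmetric
polynomial of degree 0 in `X_1, …, X_k`). -/
theorem stmt_9 (k : ℕ) (hk : 1 ≤ k) (E : Finset (Fin k × Fin k)) (r : Fin k)
    (hloop : ∀ e ∈ E, e.1 ≠ e.2)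
    (hdouble : ∀ a b : Fin k, (a, b) ∈ E → (b, a) ∉ E)
    (htree : (SimpleGraph.fromRel (fun a b => (a, b) ∈ E)).IsTree) :
    ∃ c : ℤ, treeEval k E r = (c : FractionRing (MvPolynomial (Fin k) ℚ)) := by
  classical
  set R := MvPolynomial (Fin k) ℚ with hR
  let K := FractionRing R
  let ι : R →+* K := algebraMap R K
  have hι : Function.Injective ι := IsFractionRing.injective R K
  -- basic objects
  set P : Finset (Fin k × Fin k) := Finset.univ.filter (fun p => p.1 < p.2) with hP
  let lin : Fin k × Fin k → R := fun p => X p.2 - X p.1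
  let D : R := ∏ p ∈ P, lin p
  let num : Equiv.Perm (Fin k) → R := fun σ => ∏ v ∈ Finset.univ.erase r, X (σ v)
  let den : Equiv.Perm (Fin k) → R := fun σ => ∏ e ∈ E, (X (σ e.1) - X (σ e.2))
  let msort : Equiv.Perm (Fin k) → Fin k × Fin k → Fin k × Fin k := fun σ e =>
    if σ e.1 < σ e.2 then (σ e.1, σ e.2) else (σ e.2, σ e.1)
  let sE : Equiv.Perm (Fin k) → Finset (Fin k × Fin k) := fun σ => E.image (msort σ)
  let εq : Equiv.Perm (Fin k) → ℚ := fun σ =>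
    ∏ e ∈ E, (if σ e.1 < σ e.2 then (-1 : ℚ) else 1)
  let q : Equiv.Perm (Fin k) → R := fun σ => C (εq σ) * ∏ p ∈ P \ sE σ, lin p
  let nn : Equiv.Perm (Fin k) → R := fun σ => num σ * q σ
  let N : R := ∑ σ : Equiv.Perm (Fin k), nn σ
  -- nonvanishing of linear factors
  have hlin_ne : ∀ p : Fin k × Fin k, p.1 ≠ p.2 → lin p ≠ 0 := by
    intro p hp
    exact sub_ne_zero.2 fun hc => hp (X_injective hc).symm
  have hPmem : ∀ p ∈ P, p.1 < p.2 := fun p hp => (Finset.mem_filter.1 hp).2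
  have hD_ne : D ≠ 0 := by
    apply Finset.prod_ne_zero_iff.2
    intro p hp
    exact hlin_ne p (ne_of_lt (hPmem p hp))
  -- edge count
  have hEcard : E.card + 1 = k := by
    have hcard := htree.card_edgeFinset
    have hbij : E.card
        = (SimpleGraph.fromRel fun a b : Fin k => (a, b) ∈ E).edgeFinset.card := by
      apply Finset.card_bij (fun (e : Fin k × Fin k) _ => Sym2.mk e.1 e.2)
      · intro e he
        rw [SimpleGraph.mem_edgeFinset, SimpleGraph.mem_edgeSet, SimpleGraph.fromRel_adj]
        exact ⟨hloop e he, Or.inl (by simpa using he)⟩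
      · intro e he f hf hef
        rw [Sym2.eq_iff] at hef
        rcases hef with ⟨h1, h2⟩ | ⟨h1, h2⟩
        · exact Prod.ext h1 h2
        · exfalso
          have hfE : (f.1, f.2) ∈ E := by simpa using hf
          have hnf : (f.2, f.1) ∉ E := hdouble f.1 f.2 hfE
          apply hnf
          have heE : (e.1, e.2) ∈ E := by simpa using he
          rwa [h1, h2] at heE
      · intro y hy
        rw [SimpleGraph.mem_edgeFinset] at hy
        revert hy
        refine Sym2.ind (fun a b hy => ?_) y
        rw [SimpleGraph.mem_edgeSet, SimpleGraph.fromRel_adj] at hy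
        rcases hy.2 with hab | hba
        · exact ⟨(a, b), hab, rfl⟩
        · exact ⟨(b, a), hba, Sym2.eq_swap⟩
    rw [Fintype.card_fin] at hcard
    omega
  -- msort is injective on E, lands in P
  have hmsort_mem : ∀ (σ : Equiv.Perm (Fin k)), ∀ e ∈ E, msort σ e ∈ P := by
    intro σ e he
    have hne : σ e.1 ≠ σ e.2 := fun hc => hloop e he (σ.injective hc)
    simp only [msort, hP, Finset.mem_filter, Finset.mem_univ, true_and]
    split
    · assumption
    · next h => exact lt_of_le_of_ne (not_lt.1 h) hne.symm
  have hmsort_inj : ∀ (σ : Equiv.Perm (Fin k)), Set.InjOn (msort σ) E := by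
    intro σ e he f hf hef
    simp only [msort] at hef
    have key : (σ e.1 = σ f.1 ∧ σ e.2 = σ f.2) ∨ (σ e.1 = σ f.2 ∧ σ e.2 = σ f.1) := by
      split_ifs at hef with h1 h2 h2
      · exact Or.inl ⟨congrArg Prod.fst hef, congrArg Prod.snd hef⟩
      · exact Or.inr ⟨congrArg Prod.fst hef, congrArg Prod.snd hef⟩
      · exact Or.inr ⟨congrArg Prod.snd hef, congrArg Prod.fst hef⟩
      · exact Or.inl ⟨congrArg Prod.snd hef, congrArg Prod.fst hef⟩
    rcases key with ⟨h1, h2⟩ | ⟨h1, h2⟩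
    · have : e.1 = f.1 := σ.injective h1
      have : e.2 = f.2 := σ.injective h2
      exact Prod.ext (σ.injective h1) (σ.injective h2)
    · exfalso
      have he1 : e.1 = f.2 := σ.injective h1
      have he2 : e.2 = f.1 := σ.injective h2
      have : (f.1, f.2) ∈ E := by simpa using hf
      have : (f.2, f.1) ∉ E := hdouble f.1 f.2 this
      apply this
      have : (e.1, e.2) ∈ E := by simpa using he
      rwa [he1, he2] at this
  have hsE_sub : ∀ σ, sE σ ⊆ P := by
    intro σ p hp
    obtain ⟨e, he, rfl⟩ := Finset.mem_image.1 hp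
    exact hmsort_mem σ e he
  have hsE_card : ∀ σ, (sE σ).card = E.card := fun σ =>
    Finset.card_image_of_injOn (hmsort_inj σ)
  -- key factorization : den σ * q σ = D
  have hden_eq : ∀ σ, den σ = C (εq σ) * ∏ p ∈ sE σ, lin p := by
    intro σ
    have h1 : ∀ e ∈ E, (X (σ e.1) - X (σ e.2) : R)
        = (if σ e.1 < σ e.2 then (C (-1 : ℚ)) else 1) * lin (msort σ e) := by
      intro e he
      simp only [msort, lin]
      split
      · simp only [map_neg, map_one]; ring
      · simp
    calc den σ = ∏ e ∈ E, ((if σ e.1 < σ e.2 then (C (-1 : ℚ)) else 1) * lin (msort σ e)) :=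
          Finset.prod_congr rfl h1
      _ = (∏ e ∈ E, (if σ e.1 < σ e.2 then (C (-1 : ℚ)) else 1)) * ∏ e ∈ E, lin (msort σ e) :=
          Finset.prod_mul_distrib
      _ = C (εq σ) * ∏ p ∈ sE σ, lin p := by
          congr 1
          · rw [map_prod]
            exact Finset.prod_congr rfl fun e _ => by split <;> simp
          · exact (Finset.prod_image (fun a ha b hb hab => hmsort_inj σ ha hb hab)).symm
  have hεsq : ∀ σ, εq σ * εq σ = 1 := by
    intro σ
    simp only [εq, ← Finset.prod_mul_distrib]
    apply Finset.prod_eq_one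
    intro e _
    split <;> norm_num
  have hfact : ∀ σ, den σ * q σ = D := by
    intro σ
    have : den σ * q σ = (C (εq σ) * C (εq σ)) * ((∏ p ∈ sE σ, lin p) * ∏ p ∈ P \ sE σ, lin p) := by
      rw [hden_eq σ]; simp only [q]; ring
    rw [this, ← map_mul, hεsq, map_one, one_mul, mul_comm, Finset.prod_sdiff (hsE_sub σ)]
  have hden_ne : ∀ σ, den σ ≠ 0 := by
    intro σ hc
    exact hD_ne (by rw [← hfact σ, hc, zero_mul])
  -- treeEval * D = N
  have hTD : treeEval k E r * ι D = ι N := by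
    rw [treeEval, Finset.sum_mul, map_sum]
    apply Finset.sum_congr rfl
    intro σ _
    have e1 : (∏ v ∈ Finset.univ.erase r, ι (X (σ v))) = ι (num σ) := (map_prod ι _ _).symm
    have e2 : (∏ e ∈ E, ι (X (σ e.1) - X (σ e.2))) = ι (den σ) := (map_prod ι _ _).symm
    show (∏ v ∈ Finset.univ.erase r, ι (X (σ v))) / (∏ e ∈ E, ι (X (σ e.1) - X (σ e.2))) * ι D
        = ι (nn σ)
    rw [e1, e2]
    have hd : ι (den σ) ≠ 0 := fun hc => hden_ne σ (hι (by rw [hc, map_zero]))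
    rw [← hfact σ, map_mul]
    have hstep : ι (num σ) / ι (den σ) * (ι (den σ) * ι (q σ))
        = (ι (den σ) / ι (den σ)) * (ι (num σ) * ι (q σ)) := by ring
    rw [hstep, div_self hd, one_mul, ← map_mul]
  -- antisymmetry of N
  have hDswap : ∀ i j : Fin k, i ≠ j → rename (Equiv.swap i j) D = - D := by
    intro i j hij
    have := rename_swap_vandermonde (k := k) hij
    simpa [hP, lin, D] using this
  have hswapN : ∀ i j : Fin k, i ≠ j →
      rename (Equiv.swap i j) N = - N := by
    intro i j hij
    set τ := Equiv.swap i j with hτ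
    have hwnum : ∀ σ, rename τ (num σ) = num (τ * σ) := by
      intro σ
      rw [map_prod]
      exact Finset.prod_congr rfl fun v _ => by rw [rename_X]; rfl
    have hwden : ∀ σ, rename τ (den σ) = den (τ * σ) := by
      intro σ
      rw [map_prod]
      exact Finset.prod_congr rfl fun e _ => by rw [map_sub, rename_X, rename_X]; rfl
    have hwq : ∀ σ, rename τ (q σ) = - q (τ * σ) := by
      intro σ
      have h1 : den (τ * σ) * rename τ (q σ) = - D := by
        rw [← hwden σ, ← map_mul, hfact σ, hDswap i j hij]
      have h2 : den (τ * σ) * (- q (τ * σ)) = - D := by rw [mul_neg, hfact (τ * σ)]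
      exact mul_left_cancel₀ (hden_ne (τ * σ)) (h1.trans h2.symm)
    have hwnn : ∀ σ, rename τ (nn σ) = - nn (τ * σ) := by
      intro σ
      show rename τ (num σ * q σ) = _
      rw [map_mul, hwnum, hwq]
      show num (τ * σ) * - q (τ * σ) = -(num (τ * σ) * q (τ * σ))
      ring
    show rename τ (∑ σ : Equiv.Perm (Fin k), nn σ) = - N
    rw [map_sum]
    have : ∀ σ ∈ Finset.univ, rename τ (nn σ) = - nn (τ * σ) := fun σ _ => hwnn σ
    rw [Finset.sum_congr rfl this]
    have hsum : ∑ σ : Equiv.Perm (Fin k), - nn (τ * σ)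
        = - ∑ σ : Equiv.Perm (Fin k), nn (τ * σ) := by
      rw [Finset.sum_neg_distrib]
    rw [hsum, Fintype.sum_equiv (Equiv.mulLeft τ) (fun σ => nn (τ * σ)) nn (fun σ => rfl)]
  -- divisibility
  have hdvd : D ∣ N := by
    apply prod_dvd_of_prime P lin
    · intro p hp
      exact prime_X_sub_X (ne_of_lt (hPmem p hp))
    · intro p hp p' hp' hpp' hass
      obtain ⟨u, hu⟩ := hass
      have hp12 : p.1 < p.2 := hPmem p hp
      have hp12' : p'.1 < p'.2 := hPmem p' hp'
      have hex : ∃ t : Fin k, (t = p'.1 ∨ t = p'.2) ∧ t ≠ p.1 ∧ t ≠ p.2 := by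
        by_cases ha : p'.1 ≠ p.1 ∧ p'.1 ≠ p.2
        · exact ⟨p'.1, Or.inl rfl, ha⟩
        by_cases hb : p'.2 ≠ p.1 ∧ p'.2 ≠ p.2
        · exact ⟨p'.2, Or.inr rfl, hb⟩
        exfalso
        push_neg at ha hb
        rcases eq_or_ne p'.1 p.1 with h1 | h1
        · rcases eq_or_ne p'.2 p.1 with h2 | h2
          · exact (ne_of_lt hp12') (h1.trans h2.symm)
          · have h3 : p'.2 = p.2 := hb h2
            exact hpp' (Prod.ext h1.symm h3.symm)
        · have h4 : p'.1 = p.2 := ha h1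
          rcases eq_or_ne p'.2 p.1 with h2 | h2
          · have hlt : p.2 < p.1 := by rw [← h4, ← h2]; exact hp12'
            exact absurd hp12 (not_lt.2 (le_of_lt hlt))
          · have h3 : p'.2 = p.2 := hb h2
            exact (ne_of_lt hp12') (h4.trans h3.symm)
      obtain ⟨t, ht, ht1, ht2⟩ := hex
      let ev : R →+* ℚ := (eval (fun v : Fin k => if v = t then (1:ℚ) else 0))
      have hev0 : ev (lin p) = 0 := by
        show (eval (fun v : Fin k => if v = t then (1:ℚ) else 0)) (X p.2 - X p.1) = 0
        simp only [map_sub, eval_X, if_neg (fun h : p.2 = t => ht2 h.symm),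
          if_neg (fun h : p.1 = t => ht1 h.symm), sub_zero]
      have hev1 : ev (lin p') ≠ 0 := by
        have hne' : p'.1 ≠ p'.2 := ne_of_lt hp12'
        show (eval (fun v : Fin k => if v = t then (1:ℚ) else 0)) (X p'.2 - X p'.1) ≠ 0
        rw [map_sub, eval_X, eval_X]
        rcases ht with rfl | rfl
        · rw [if_neg (fun h : p'.2 = p'.1 => hne' h.symm), if_pos rfl]; norm_num
        · rw [if_pos rfl, if_neg hne']; norm_num
      apply hev1
      rw [← hu, map_mul, hev0, zero_mul]
    · intro p hp
      have hij : p.1 ≠ p.2 := ne_of_lt (hPmem p hp)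
      have hd2 := dvd_sub_rename p.1 p.2 N
      rw [hswapN p.1 p.2 hij, sub_neg_eq_add] at hd2
      have h2N : (lin p) ∣ (2 : R) * N := by
        have : (2 : R) * N = N + N := by ring
        rw [this]; exact hd2
      have hNeq : N = C (2⁻¹ : ℚ) * ((2 : R) * N) := by
        rw [← mul_assoc]
        have h1 : (C (2⁻¹ : ℚ) * (2 : R)) = 1 := by
          rw [show ((2:R)) = C (2:ℚ) from (map_ofNat C 2).symm, ← map_mul]
          norm_num
        rw [h1, one_mul]
      rw [hNeq]
      exact Dvd.dvd.mul_left h2N _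
  -- homogeneity
  have hlinhom : ∀ p : Fin k × Fin k, (lin p).IsHomogeneous 1 := by
    intro p
    exact (isHomogeneous_X _ _).sub (isHomogeneous_X _ _)
  have hDhom : D.IsHomogeneous P.card := by
    have := MvPolynomial.IsHomogeneous.prod P lin (fun _ => 1)
      (fun p _ => hlinhom p)
    simpa using this
  have hle : E.card ≤ P.card := by
    rw [← hsE_card 1]
    exact Finset.card_le_card (hsE_sub 1)
  have hNhom : N.IsHomogeneous P.card := by
    apply MvPolynomial.IsHomogeneous.sum
    intro σ _
    have h1 : (num σ).IsHomogeneous (k - 1) := by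
      have := MvPolynomial.IsHomogeneous.prod (Finset.univ.erase r)
        (fun v => (X (σ v) : R)) (fun _ => 1) (fun v _ => isHomogeneous_X _ _)
      have hcard : (Finset.univ.erase r).card = k - 1 := by
        rw [Finset.card_erase_of_mem (Finset.mem_univ r), Finset.card_univ, Fintype.card_fin]
      simpa [hcard] using this
    have h2 : (∏ p ∈ P \ sE σ, lin p).IsHomogeneous (P.card - E.card) := by
      have := MvPolynomial.IsHomogeneous.prod (P \ sE σ) lin (fun _ => 1)
        (fun p _ => hlinhom p)
      have hcard : (P \ sE σ).card = P.card - E.card := by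
        rw [Finset.card_sdiff_of_subset (hsE_sub σ), hsE_card σ]
      simpa [hcard] using this
    have h3 : (q σ).IsHomogeneous (0 + (P.card - E.card)) :=
      (isHomogeneous_C _ _).mul h2
    have h4 : (nn σ).IsHomogeneous ((k - 1) + (0 + (P.card - E.card))) := h1.mul h3
    have : (k - 1) + (0 + (P.card - E.card)) = P.card := by omega
    rwa [this] at h4
  -- N = C γ * D
  obtain ⟨c', hc'⟩ := hdvd
  have hγ : ∃ γ : ℚ, N = C γ * D := by
    rcases eq_or_ne N 0 with hN0 | hN0
    · refine ⟨0, by rw [hN0, map_zero, zero_mul]⟩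
    · obtain ⟨γ, hγ⟩ := exists_C_of_mul_isHomogeneous hDhom hD_ne (by rw [← hc']; exact hNhom)
      exact ⟨γ, by rw [hc', hγ, mul_comm]⟩
  obtain ⟨γ, hγ⟩ := hγ
  -- integer coefficients
  have hint : γ.den = 1 := by
    let Sz : Subring ℚ := (Int.castRingHom ℚ).range
    let W : Subring R :=
      { carrier := {p : R | ∀ m, coeff m p ∈ Sz}
        zero_mem' := by intro m; rw [coeff_zero]; exact Sz.zero_mem
        one_mem' := by
          intro m
          rw [coeff_one]
          split
          · exact Sz.one_mem
          · exact Sz.zero_mem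
        add_mem' := by
          intro a b ha hb m
          rw [coeff_add]
          exact Sz.add_mem (ha m) (hb m)
        neg_mem' := by
          intro a ha m
          rw [coeff_neg]
          exact Sz.neg_mem (ha m)
        mul_mem' := by
          intro a b ha hb m
          rw [coeff_mul]
          exact sum_mem fun c _ => Sz.mul_mem (ha c.1) (hb c.2) }
    have hX : ∀ v : Fin k, (X v : R) ∈ W := by
      intro v m
      show coeff m (X v : R) ∈ Sz
      rw [coeff_X']
      split
      · exact Sz.one_mem
      · exact Sz.zero_mem
    have hlinW : ∀ p : Fin k × Fin k, lin p ∈ W := fun p => W.sub_mem (hX _) (hX _)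
    have hCW : ∀ γ' : ℚ, γ' ∈ Sz → (C γ' : R) ∈ W := by
      intro γ' hγ' m
      show coeff m (C γ' : R) ∈ Sz
      rw [coeff_C]
      split
      · exact hγ'
      · exact Sz.zero_mem
    have hεW : ∀ σ : Equiv.Perm (Fin k), εq σ ∈ Sz := by
      intro σ
      apply prod_mem
      intro e _
      split
      · exact Sz.neg_mem Sz.one_mem
      · exact Sz.one_mem
    have hNW : N ∈ W := by
      apply sum_mem
      intro σ _
      exact W.mul_mem (prod_mem fun v _ => hX (σ v))
        (W.mul_mem (hCW _ (hεW σ)) (prod_mem fun p _ => hlinW p))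
    -- integral model of D
    let D₀ : MvPolynomial (Fin k) ℤ := ∏ p ∈ P, (X p.2 - X p.1)
    have hD₀ : MvPolynomial.map (Int.castRingHom ℚ) D₀ = D := by
      rw [map_prod]
      exact Finset.prod_congr rfl fun p _ => by
        rw [map_sub, MvPolynomial.map_X, MvPolynomial.map_X]
    have key : ∀ m, coeff m N = γ * coeff m D := fun m => by
      rw [hγ, coeff_C_mul]
    have hdenpos : ((γ.den : ℚ)) ≠ 0 := Nat.cast_ne_zero.2 γ.den_nz
    have hnumden : γ * (γ.den : ℚ) = (γ.num : ℚ) := by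
      calc γ * (γ.den:ℚ) = ((γ.num:ℚ)/(γ.den:ℚ)) * (γ.den:ℚ) := by rw [Rat.num_div_den]
        _ = (γ.num:ℚ) := div_mul_cancel₀ _ hdenpos
    have hdvdcoeff : ∀ m, (γ.den : ℤ) ∣ coeff m D₀ := by
      intro m
      obtain ⟨nz, hnz⟩ := hNW m
      have hcD : coeff m D = ((coeff m D₀ : ℤ) : ℚ) := by
        rw [← hD₀, MvPolynomial.coeff_map]; rfl
      have h1 : (nz : ℚ) = γ * ((coeff m D₀ : ℤ) : ℚ) := by
        rw [show ((nz : ℤ) : ℚ) = coeff m N from hnz, key m, hcD]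
      have h2 : ((γ.num * coeff m D₀ : ℤ) : ℚ) = ((γ.den * nz : ℤ) : ℚ) := by
        push_cast
        rw [← hnumden]
        rw [h1]
        ring
      have h3 : γ.num * coeff m D₀ = γ.den * nz := Int.cast_injective h2
      have h4 : (γ.den : ℤ) ∣ γ.num * coeff m D₀ := ⟨nz, h3⟩
      have H1 : Int.gcd (γ.den : ℤ) γ.num = 1 := by
        have := γ.reduced.symm
        simpa [Int.gcd] using this
      exact Int.dvd_of_dvd_mul_right_of_gcd_one h4 H1
    by_contra hden1
    have hp : Nat.Prime γ.den.minFac := Nat.minFac_prime hden1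
    haveI : Fact (Nat.Prime γ.den.minFac) := ⟨hp⟩
    let ψ := MvPolynomial.map (σ := Fin k) (Int.castRingHom (ZMod γ.den.minFac))
    have hψD₀ : ψ D₀ = 0 := by
      apply MvPolynomial.ext
      intro m
      rw [MvPolynomial.coeff_map, coeff_zero]
      have : ((γ.den.minFac : ℤ)) ∣ coeff m D₀ :=
        dvd_trans (Int.natCast_dvd_natCast.2 (Nat.minFac_dvd _)) (hdvdcoeff m)
      exact (ZMod.intCast_zmod_eq_zero_iff_dvd _ _).2 this
    have hψD₀' : ψ D₀ = ∏ p ∈ P, (X p.2 - X p.1 : MvPolynomial (Fin k) (ZMod γ.den.minFac)) := by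
      rw [map_prod]
      exact Finset.prod_congr rfl fun p _ => by
        rw [map_sub, MvPolynomial.map_X, MvPolynomial.map_X]
    have hne : (∏ p ∈ P, (X p.2 - X p.1 : MvPolynomial (Fin k) (ZMod γ.den.minFac))) ≠ 0 := by
      apply Finset.prod_ne_zero_iff.2
      intro p hp'
      exact sub_ne_zero.2 fun hc => (ne_of_lt (hPmem p hp')) (X_injective hc).symm
    exact hne (hψD₀' ▸ hψD₀)
  -- conclusion
  refine ⟨γ.num, ?_⟩
  have hγℤ : (γ.num : ℚ) = γ := by
    conv_rhs => rw [← Rat.num_div_den γ, hint]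
    simp
  have hfinal : treeEval k E r * ι D = (γ.num : K) * ι D := by
    rw [hTD, hγ, map_mul]
    congr 1
    rw [← hγℤ]
    rw [show (C ((γ.num : ℤ) : ℚ) : R) = ((γ.num : ℤ) : R) from map_intCast (C : ℚ →+* R) γ.num]
    exact map_intCast ι γ.num
  have hιD : ι D ≠ 0 := fun hc => hD_ne (hι (by rw [hc, map_zero]))
  exact mul_right_cancel₀ hιD hfinal
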